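/- (Lemma 6.4, combinatorial curvature bound) Assume ℓ*(G) < ∞ and suppose G carries an orientation such that K_comb(v) > 0 for every v ∈ V. Then α(G) ≥ (inf_{v ∈ V} K_comb(v))/ℓ*(G). -/

import Mathlib

open scoped Classical ENNReal
open MeasureTheory

noncomputable section

/-- A real function on `[0, L]` which is continuous and piecewise continuously
differentiable: there is a finite partition `0 = x 0 < x 1 < ... < x n = L` such that
on each closed piece the function has a continuous derivative. -/
def PiecewiseC1 (f : ℝ → ℝ) (L : ℝ) : Prop :=
  ContinuousOn f (Set.Icc 0 L) ∧
  ∃ (n : ℕ) (x : Fin (n + 1) → ℝ), x 0 = 0 ∧ x (Fin.last n) = L ∧ StrictMono x ∧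
    ∀ i : Fin n, ∃ g : ℝ → ℝ,
      ContinuousOn g (Set.Icc (x i.castSucc) (x i.succ)) ∧
      ∀ t ∈ Set.Icc (x i.castSucc) (x i.succ),
        HasDerivWithinAt f (g t) (Set.Icc (x i.castSucc) (x i.succ)) t

/-- The underlying (unoriented) simple graph of a set of edges `E` with endpoint
map `ends : E → V × V`. -/
def graphOf {V E : Type} (ends : E → V × V) : SimpleGraph V :=
  SimpleGraph.fromRel fun u v => ∃ e, ends e = (u, v)

/-- A metric graph: a connected, locally finite, simple combinatorial graph with
countably infinite vertex and edge sets, each edge having a finite positive length.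
Each edge carries an (auxiliary) orientation given by `ends`. -/
structure MetricGraph : Type 1 where
  V : Type
  E : Type
  countV : Countable V
  infV : Infinite V
  countE : Countable E
  infE : Infinite E
  ends : E → V × V
  len : E → ℝ
  len_pos : ∀ e, 0 < len e
  no_loops : ∀ e, (ends e).1 ≠ (ends e).2
  no_multi : Function.Injective fun e => Sym2.mk (ends e)
  locfin : ∀ v, {e | (ends e).1 = v ∨ (ends e).2 = v}.Finite
  conn : (graphOf ends).Connected

namespace MetricGraph

/-- The underlying simple graph. -/
def graph (Γ : MetricGraph) : SimpleGraph Γ.V := graphOf Γ.ends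

/-- The star of a vertex: the set of edges incident to it. -/
def star (Γ : MetricGraph) (v : Γ.V) : Set Γ.E :=
  {e | (Γ.ends e).1 = v ∨ (Γ.ends e).2 = v}

/-- Combinatorial degree of a vertex. -/
def degree (Γ : MetricGraph) (v : Γ.V) : ℕ := (Γ.locfin v).toFinset.card

/-- The vertices of a (finite) subgraph given by a finite set of edges. -/
def vertsOf (Γ : MetricGraph) (F : Finset Γ.E) : Finset Γ.V :=
  F.image (fun e => (Γ.ends e).1) ∪ F.image fun e => (Γ.ends e).2

/-- The degree of a vertex inside the subgraph given by the edge set `F`. -/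
def degIn (Γ : MetricGraph) (F : Finset Γ.E) (v : Γ.V) : ℕ :=
  (F.filter fun e => (Γ.ends e).1 = v ∨ (Γ.ends e).2 = v).card

/-- Connectedness of the subgraph spanned by the edge set `F`. -/
def SubConn (Γ : MetricGraph) (F : Finset Γ.E) : Prop :=
  ((SimpleGraph.fromRel fun u v => ∃ e ∈ F, Γ.ends e = (u, v)).induce
    (↑(Γ.vertsOf F) : Set Γ.V)).Connected

/-- A finite connected subgraph (with at least one edge), given by its edge set. -/
def IsFinSubgraph (Γ : MetricGraph) (F : Finset Γ.E) : Prop :=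
  F.Nonempty ∧ Γ.SubConn F

/-- The boundary of a finite subgraph with respect to `Γ`: the vertices whose degree
in the subgraph is strictly smaller than the degree in `Γ`. -/
def bdry (Γ : MetricGraph) (F : Finset Γ.E) : Finset Γ.V :=
  (Γ.vertsOf F).filter fun v => Γ.degIn F v < Γ.degree v

/-- `deg (∂_G G̃)`. -/
def degBdry (Γ : MetricGraph) (F : Finset Γ.E) : ℝ :=
  ∑ v ∈ Γ.bdry F, (Γ.degIn F v : ℝ)

/-- The total length (Lebesgue measure) of a finite subgraph. -/
def mes (Γ : MetricGraph) (F : Finset Γ.E) : ℝ := ∑ e ∈ F, Γ.len e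

/-- The isoperimetric (Cheeger) constant of a metric graph. -/
def alpha (Γ : MetricGraph) : ℝ :=
  sInf {r : ℝ | ∃ F : Finset Γ.E, Γ.IsFinSubgraph F ∧ r = Γ.degBdry F / Γ.mes F}

/-- The isoperimetric constant at infinity, as an element of `[0,∞]`. -/
def alphaEssEnn (Γ : MetricGraph) : ℝ≥0∞ :=
  ⨆ W : Finset Γ.E, ⨅ (F : Finset Γ.E) (_ : Γ.IsFinSubgraph F ∧ Disjoint F W),
    ENNReal.ofReal (Γ.degBdry F / Γ.mes F)

/-- The vertex weight `m(v) = Σ_{e ∈ E_v} |e|`. -/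
def mweight (Γ : MetricGraph) (v : Γ.V) : ℝ :=
  ∑ e ∈ (Γ.locfin v).toFinset, Γ.len e

/-- The set of boundary edges of a vertex set: edges with exactly one endpoint in `X`. -/
def Eb (Γ : MetricGraph) (X : Set Γ.V) : Set Γ.E :=
  {e | Xor' ((Γ.ends e).1 ∈ X) ((Γ.ends e).2 ∈ X)}

/-- The discrete isoperimetric constant of a vertex set `U`. -/
def alphaD (Γ : MetricGraph) (U : Set Γ.V) : ℝ :=
  sInf {r : ℝ | ∃ X : Finset Γ.V, ↑X ⊆ U ∧ X.Nonempty ∧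
    r = ((Γ.Eb ↑X).ncard : ℝ) / ∑ v ∈ X, Γ.mweight v}

/-- The discrete isoperimetric constant at infinity, as an element of `[0,∞]`. -/
def alphaDEssEnn (Γ : MetricGraph) : ℝ≥0∞ :=
  ⨆ X : Finset Γ.V, ENNReal.ofReal (Γ.alphaD (↑X : Set Γ.V)ᶜ)

/-- The combinatorial isoperimetric constant. -/
def alphaComb (Γ : MetricGraph) : ℝ :=
  sInf {r : ℝ | ∃ X : Finset Γ.V, X.Nonempty ∧
    r = ((Γ.Eb ↑X).ncard : ℝ) / ∑ v ∈ X, (Γ.degree v : ℝ)}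

/-- `ℓ*(G) = sup of edge lengths`. -/
def ellSup (Γ : MetricGraph) : ℝ := sSup (Set.range Γ.len)

/-- `ℓ_*(G) = inf of edge lengths`. -/
def ellInf (Γ : MetricGraph) : ℝ := sInf (Set.range Γ.len)

/-- `ℓ*(G)` as an element of `[0,∞]`. -/
def ellSupEnn (Γ : MetricGraph) : ℝ≥0∞ := ⨆ e : Γ.E, ENNReal.ofReal (Γ.len e)

/-- `ℓ*_ess(G) = inf_F sup_{e ∉ F} |e|` as an element of `[0,∞]`. -/
def ellSupEssEnn (Γ : MetricGraph) : ℝ≥0∞ :=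
  ⨅ W : Finset Γ.E, ⨆ e : {e : Γ.E // e ∉ W}, ENNReal.ofReal (Γ.len (e : Γ.E))

/-- Outgoing edges at a vertex (for the fixed orientation). -/
def plusE (Γ : MetricGraph) (v : Γ.V) : Set Γ.E := {e | (Γ.ends e).1 = v}

/-- Incoming edges at a vertex (for the fixed orientation). -/
def minusE (Γ : MetricGraph) (v : Γ.V) : Set Γ.E := {e | (Γ.ends e).2 = v}

/-- The curvature `K(v) = ((#E_v⁺ − #E_v⁻)/#E_v⁺) · inf_{e ∈ E_v⁺} 1/|e|`. -/
def Kcurv (Γ : MetricGraph) (v : Γ.V) : ℝ :=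
  (((Γ.plusE v).ncard : ℝ) - ((Γ.minusE v).ncard : ℝ)) / ((Γ.plusE v).ncard : ℝ) *
    sInf ((fun e => 1 / Γ.len e) '' Γ.plusE v)

/-- The combinatorial curvature `K_comb(v) = 1 − #E_v⁻/#E_v⁺`. -/
def Kcomb (Γ : MetricGraph) (v : Γ.V) : ℝ :=
  1 - ((Γ.minusE v).ncard : ℝ) / ((Γ.plusE v).ncard : ℝ)

/-- `liminf_{v ∈ V} K(v) = sup over finite W of inf_{v ∉ W} K(v)`, in `[0,∞]`. -/
def KcurvEssEnn (Γ : MetricGraph) : ℝ≥0∞ :=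
  ⨆ W : Finset Γ.V, ⨅ v : {v : Γ.V // v ∉ W}, ENNReal.ofReal (Γ.Kcurv (v : Γ.V))

/-- `liminf_{v ∈ V} K_comb(v) = sup over finite W of inf_{v ∉ W} K_comb(v)`. -/
def KcombLiminf (Γ : MetricGraph) : ℝ :=
  sSup (Set.range fun W : Finset Γ.V => sInf (Γ.Kcomb '' (↑W : Set Γ.V)ᶜ))

/-- The value of an edgewise function at an endpoint of an edge. -/
def endVal (Γ : MetricGraph) (f : Γ.E → ℝ → ℝ) (e : Γ.E) (v : Γ.V) : ℝ :=
  if (Γ.ends e).1 = v then f e 0 else f e (Γ.len e)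

/-- A test function on the metric graph `Γ`: a family of continuous, piecewise `C¹`
functions on the edges, matching at the vertices, vanishing on all but finitely
many edges. -/
structure TestFun (Γ : MetricGraph) where
  f : Γ.E → ℝ → ℝ
  piecewise : ∀ e, PiecewiseC1 (f e) (Γ.len e)
  vertexCont : ∀ e e' : Γ.E, ∀ v : Γ.V, e ∈ Γ.star v → e' ∈ Γ.star v →
    Γ.endVal f e v = Γ.endVal f e' v
  finSupp : {e : Γ.E | ∃ x ∈ Set.Icc 0 (Γ.len e), f e x ≠ 0}.Finite

/-- `‖f‖² = Σ_e ∫₀^{|e|} f_e(x)² dx`. -/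
def TestFun.normSq {Γ : MetricGraph} (φ : TestFun Γ) : ℝ :=
  ∑ᶠ e : Γ.E, ∫ x in (0:ℝ)..Γ.len e, (φ.f e x) ^ 2

/-- `‖f′‖² = Σ_e ∫₀^{|e|} f_e′(x)² dx`. -/
def TestFun.energySq {Γ : MetricGraph} (φ : TestFun Γ) : ℝ :=
  ∑ᶠ e : Γ.E, ∫ x in (0:ℝ)..Γ.len e, (deriv (φ.f e) x) ^ 2

/-- A test function is nonzero if it does not vanish identically on the graph. -/
def TestFun.Nonzero {Γ : MetricGraph} (φ : TestFun Γ) : Prop :=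
  ∃ e : Γ.E, ∃ x ∈ Set.Icc 0 (Γ.len e), φ.f e x ≠ 0

/-- The bottom of the spectrum of the Kirchhoff Laplacian, via the variational
(Rayleigh quotient) characterization. -/
def lambda0 (Γ : MetricGraph) : ℝ :=
  sInf {r : ℝ | ∃ φ : TestFun Γ, φ.Nonzero ∧ r = φ.energySq / φ.normSq}

end MetricGraph

/-- A weighted graph `(V, m, b)`: a connected, locally finite, simple combinatorial
graph with countably infinite vertex and edge sets, an edge weight `b` and a vertex
weight `m`. -/
structure WeightedGraph : Type 1 where
  V : Type
  E : Type
  countV : Countable V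
  infV : Infinite V
  countE : Countable E
  infE : Infinite E
  ends : E → V × V
  no_loops : ∀ e, (ends e).1 ≠ (ends e).2
  no_multi : Function.Injective fun e => Sym2.mk (ends e)
  locfin : ∀ v, {e | (ends e).1 = v ∨ (ends e).2 = v}.Finite
  conn : (graphOf ends).Connected
  b : E → ℝ
  b_pos : ∀ e, 0 < b e
  m : V → ℝ
  m_pos : ∀ v, 0 < m v

namespace WeightedGraph

/-- An edge weight `d` is intrinsic if `Σ_{e ∈ E_v} d(e)² b(e) ≤ m(v)` for all `v`. -/
def Intrinsic (Γ : WeightedGraph) (d : Γ.E → ℝ) : Prop :=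
  ∀ v, ∑ e ∈ (Γ.locfin v).toFinset, d e ^ 2 * Γ.b e ≤ Γ.m v

/-- The boundary edges of a vertex set: edges with exactly one endpoint in `X`. -/
def Eb (Γ : WeightedGraph) (X : Set Γ.V) : Set Γ.E :=
  {e | Xor' ((Γ.ends e).1 ∈ X) ((Γ.ends e).2 ∈ X)}

/-- The discrete isoperimetric constant `α_d(U)` with respect to the weight `d`. -/
def alphaD (Γ : WeightedGraph) (d : Γ.E → ℝ) (U : Set Γ.V) : ℝ :=
  sInf {r : ℝ | ∃ X : Finset Γ.V, ↑X ⊆ U ∧ X.Nonempty ∧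
    r = (∑ᶠ e ∈ Γ.Eb ↑X, d e * Γ.b e) / ∑ v ∈ X, Γ.m v}

/-- The discrete isoperimetric constant at infinity, in `[0,∞]`. -/
def alphaDEssEnn (Γ : WeightedGraph) (d : Γ.E → ℝ) : ℝ≥0∞ :=
  ⨆ X : Finset Γ.V, ENNReal.ofReal (Γ.alphaD d (↑X : Set Γ.V)ᶜ)

/-- The energy form `Q(u) = Σ_e b(e) (u(e_i) − u(e_0))²`. -/
def Q (Γ : WeightedGraph) (u : Γ.V → ℝ) : ℝ :=
  ∑ᶠ e : Γ.E, Γ.b e * (u (Γ.ends e).2 - u (Γ.ends e).1) ^ 2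

/-- The squared norm `Σ_v m(v) u(v)²`. -/
def normSqD (Γ : WeightedGraph) (u : Γ.V → ℝ) : ℝ :=
  ∑ᶠ v : Γ.V, Γ.m v * u v ^ 2

/-- The bottom of the spectrum of the Friedrichs extension of the weighted Laplacian,
via the variational characterization over finitely supported functions. -/
def lambda0 (Γ : WeightedGraph) : ℝ :=
  sInf {r : ℝ | ∃ u : Γ.V → ℝ, (Function.support u).Finite ∧ u ≠ 0 ∧
    r = Γ.Q u / Γ.normSqD u}

/-- The bottom of the essential spectrum of the Friedrichs extension, via Glazman's
decomposition principle, in `[0,∞]`. -/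
def lambda0EssEnn (Γ : WeightedGraph) : ℝ≥0∞ :=
  ⨆ X : Finset Γ.V, ⨅ (u : Γ.V → ℝ)
    (_ : (Function.support u).Finite ∧ u ≠ 0 ∧ ∀ v ∈ X, u v = 0),
      ENNReal.ofReal (Γ.Q u / Γ.normSqD u)

end WeightedGraph

end

section Aux

open Finset

namespace MetricGraph

lemma filter_incident_subset (Γ : MetricGraph) (F : Finset Γ.E) (v : Γ.V) :
    F.filter (fun e => (Γ.ends e).1 = v ∨ (Γ.ends e).2 = v) ⊆ (Γ.locfin v).toFinset := by
  intro e he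
  simp only [Finset.mem_filter] at he
  simpa [Set.Finite.mem_toFinset] using he.2

lemma degIn_le_degree (Γ : MetricGraph) (F : Finset Γ.E) (v : Γ.V) :
    Γ.degIn F v ≤ Γ.degree v :=
  Finset.card_le_card (Γ.filter_incident_subset F v)

lemma interior_filter_eq (Γ : MetricGraph) (F : Finset Γ.E) (v : Γ.V)
    (hv : Γ.degIn F v = Γ.degree v) :
    F.filter (fun e => (Γ.ends e).1 = v ∨ (Γ.ends e).2 = v) = (Γ.locfin v).toFinset := by
  apply Finset.eq_of_subset_of_card_le (Γ.filter_incident_subset F v)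
  exact le_of_eq hv.symm

lemma minusE_finite (Γ : MetricGraph) (v : Γ.V) : (Γ.minusE v).Finite :=
  (Γ.locfin v).subset (fun e he => Or.inr he)

lemma plusE_finite (Γ : MetricGraph) (v : Γ.V) : (Γ.plusE v).Finite :=
  (Γ.locfin v).subset (fun e he => Or.inl he)

lemma ncard_minusE (Γ : MetricGraph) (v : Γ.V) :
    (Γ.minusE v).ncard = ((Γ.locfin v).toFinset.filter fun e => (Γ.ends e).2 = v).card := by
  rw [← Set.ncard_coe_finset]
  congr 1
  ext e
  simp only [Finset.coe_filter, Set.Finite.mem_toFinset, Set.mem_setOf_eq, minusE]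
  tauto

lemma ncard_plusE (Γ : MetricGraph) (v : Γ.V) :
    (Γ.plusE v).ncard = ((Γ.locfin v).toFinset.filter fun e => (Γ.ends e).1 = v).card := by
  rw [← Set.ncard_coe_finset]
  congr 1
  ext e
  simp only [Finset.coe_filter, Set.Finite.mem_toFinset, Set.mem_setOf_eq, plusE]
  tauto

lemma interior_minus_card (Γ : MetricGraph) (F : Finset Γ.E) (v : Γ.V)
    (hv : Γ.degIn F v = Γ.degree v) :
    (F.filter fun e => (Γ.ends e).2 = v).card = (Γ.minusE v).ncard := by
  rw [Γ.ncard_minusE, ← Γ.interior_filter_eq F v hv, Finset.filter_filter]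
  congr 1
  ext e
  simp only [Finset.mem_filter]
  tauto

lemma interior_plus_card (Γ : MetricGraph) (F : Finset Γ.E) (v : Γ.V)
    (hv : Γ.degIn F v = Γ.degree v) :
    (F.filter fun e => (Γ.ends e).1 = v).card = (Γ.plusE v).ncard := by
  rw [Γ.ncard_plusE, ← Γ.interior_filter_eq F v hv, Finset.filter_filter]
  congr 1
  ext e
  simp only [Finset.mem_filter]
  tauto

/-- The key counting estimate: `c * #F ≤ deg(∂ F)` for `c` a lower bound on `K_comb`. -/
lemma key_count (Γ : MetricGraph)
    (h : ∀ v : Γ.V, (Γ.plusE v).Nonempty ∧ 0 < Γ.Kcomb v)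
    (c : ℝ) (hc : ∀ v, c ≤ Γ.Kcomb v) (hc1 : c ≤ 1) (F : Finset Γ.E) :
    c * F.card ≤ Γ.degBdry F := by
  classical
  set verts := Γ.vertsOf F with hverts
  have hfibm : (F.card : ℝ) = ∑ v ∈ verts, ((F.filter fun e => (Γ.ends e).2 = v).card : ℝ) := by
    rw [← Nat.cast_sum]
    exact_mod_cast Finset.card_eq_sum_card_fiberwise
      (fun e he => by
        simp only [hverts, vertsOf, Finset.mem_coe, Finset.mem_union, Finset.mem_image]
        exact Or.inr ⟨e, he, rfl⟩)
  have hfibp : (F.card : ℝ) = ∑ v ∈ verts, ((F.filter fun e => (Γ.ends e).1 = v).card : ℝ) := by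
    rw [← Nat.cast_sum]
    exact_mod_cast Finset.card_eq_sum_card_fiberwise
      (fun e he => by
        simp only [hverts, vertsOf, Finset.mem_coe, Finset.mem_union, Finset.mem_image]
        exact Or.inl ⟨e, he, rfl⟩)
  set P : Γ.V → Prop := fun v => Γ.degIn F v < Γ.degree v with hP
  have hsplit :
      (∑ v ∈ verts.filter P, ((F.filter fun e => (Γ.ends e).2 = v).card : ℝ)) +
      (∑ v ∈ verts.filter (fun v => ¬ P v), ((F.filter fun e => (Γ.ends e).2 = v).card : ℝ)) =
      ∑ v ∈ verts, ((F.filter fun e => (Γ.ends e).2 = v).card : ℝ) :=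
    Finset.sum_filter_add_sum_filter_not verts P _
  -- boundary part
  have hbdry : (∑ v ∈ verts.filter P, ((F.filter fun e => (Γ.ends e).2 = v).card : ℝ))
      ≤ Γ.degBdry F := by
    unfold degBdry bdry
    apply Finset.sum_le_sum
    intro v hv
    have : (F.filter fun e => (Γ.ends e).2 = v).card ≤ Γ.degIn F v :=
      Finset.card_le_card (Finset.monotone_filter_right F (fun e _ he => Or.inr he))
    exact_mod_cast this
  -- interior part
  have hint : (∑ v ∈ verts.filter (fun v => ¬ P v), ((F.filter fun e => (Γ.ends e).2 = v).card : ℝ))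
      ≤ (1 - c) * ∑ v ∈ verts, ((F.filter fun e => (Γ.ends e).1 = v).card : ℝ) := by
    have step1 : (∑ v ∈ verts.filter (fun v => ¬ P v),
        ((F.filter fun e => (Γ.ends e).2 = v).card : ℝ))
        ≤ ∑ v ∈ verts.filter (fun v => ¬ P v),
          (1 - c) * ((F.filter fun e => (Γ.ends e).1 = v).card : ℝ) := by
      apply Finset.sum_le_sum
      intro v hv
      simp only [Finset.mem_filter, hP, not_lt] at hv
      have heq : Γ.degIn F v = Γ.degree v := le_antisymm (Γ.degIn_le_degree F v) hv.2
      rw [Γ.interior_minus_card F v heq, Γ.interior_plus_card F v heq]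
      -- now: (minusE v).ncard ≤ (1-c) * (plusE v).ncard
      have hpos : (0 : ℝ) < ((Γ.plusE v).ncard : ℝ) := by
        have := (Set.ncard_pos (Γ.plusE_finite v)).mpr (h v).1
        exact_mod_cast this
      have hK := hc v
      unfold Kcomb at hK
      have h2 : ((Γ.minusE v).ncard : ℝ) / ((Γ.plusE v).ncard : ℝ) ≤ 1 - c := by linarith
      exact (div_le_iff₀ hpos).mp h2
    refine step1.trans ?_
    rw [← Finset.mul_sum]
    apply mul_le_mul_of_nonneg_left _ (by linarith)
    apply Finset.sum_le_sum_of_subset_of_nonneg (Finset.filter_subset _ _)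
    intro v _ _
    positivity
  have := hfibm
  nlinarith [hsplit, hbdry, hint, hfibp.symm ▸ le_refl ((F.card : ℝ))]

end MetricGraph

end Aux

lemma MetricGraph.singleton_finsubgraph (Γ : MetricGraph) (e₀ : Γ.E) :
    Γ.IsFinSubgraph {e₀} := by
  classical
  refine ⟨Finset.singleton_nonempty e₀, ?_⟩
  unfold SubConn
  have hmem : ∀ w : Γ.V, w ∈ Γ.vertsOf {e₀} ↔ w = (Γ.ends e₀).1 ∨ w = (Γ.ends e₀).2 := by
    intro w
    simp [vertsOf, eq_comm]
  haveI : Nonempty (↑(Γ.vertsOf {e₀}) : Set Γ.V) :=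
    ⟨⟨(Γ.ends e₀).1, by simpa using (hmem _).mpr (Or.inl rfl)⟩⟩
  constructor
  · intro a b
    by_cases hab : a = b
    · exact hab ▸ SimpleGraph.Reachable.refl a
    · apply SimpleGraph.Adj.reachable
      have hane : (a : Γ.V) ≠ (b : Γ.V) := fun hh => hab (Subtype.ext hh)
      have ha := (hmem a).mp (by exact_mod_cast a.2)
      have hb := (hmem b).mp (by exact_mod_cast b.2)
      rw [SimpleGraph.comap_adj, SimpleGraph.fromRel_adj]
      refine ⟨hane, ?_⟩
      rcases ha with ha | ha <;> rcases hb with hb | hb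
      · exact absurd (ha.trans hb.symm) hane
      · exact Or.inl ⟨e₀, Finset.mem_singleton_self e₀, Prod.ext ha.symm hb.symm⟩
      · exact Or.inr ⟨e₀, Finset.mem_singleton_self e₀, Prod.ext hb.symm ha.symm⟩
      · exact absurd (ha.trans hb.symm) hane

theorem alpha_ge_inf_comb_curvature' (Γ : MetricGraph)
    (hlen : BddAbove (Set.range Γ.len))
    (h : ∀ v : Γ.V, (Γ.plusE v).Nonempty ∧ 0 < Γ.Kcomb v) :
    sInf (Set.range Γ.Kcomb) / Γ.ellSup ≤ Γ.alpha := by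
  classical
  haveI := Γ.infV
  haveI := Γ.infE
  set c := sInf (Set.range Γ.Kcomb) with hcdef
  have hbdd : BddBelow (Set.range Γ.Kcomb) := by
    refine ⟨0, ?_⟩
    rintro _ ⟨v, rfl⟩
    exact (h v).2.le
  have hc : ∀ v, c ≤ Γ.Kcomb v := fun v => csInf_le hbdd ⟨v, rfl⟩
  have hc0 : 0 ≤ c := by
    apply le_csInf (Set.range_nonempty _)
    rintro _ ⟨v, rfl⟩
    exact (h v).2.le
  have hc1 : c ≤ 1 := by
    obtain ⟨v⟩ : Nonempty Γ.V := inferInstance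
    refine (hc v).trans ?_
    unfold MetricGraph.Kcomb
    have : (0:ℝ) ≤ ((Γ.minusE v).ncard : ℝ) / ((Γ.plusE v).ncard : ℝ) := by positivity
    linarith
  set L := Γ.ellSup with hLdef
  have hLe : ∀ e, Γ.len e ≤ L := fun e => le_csSup hlen ⟨e, rfl⟩
  obtain ⟨e₀⟩ : Nonempty Γ.E := inferInstance
  have hLpos : 0 < L := lt_of_lt_of_le (Γ.len_pos e₀) (hLe e₀)
  unfold MetricGraph.alpha
  apply le_csInf
  · exact ⟨Γ.degBdry {e₀} / Γ.mes {e₀}, {e₀}, Γ.singleton_finsubgraph e₀, rfl⟩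
  · rintro r ⟨F, ⟨hFne, _⟩, rfl⟩
    have hkey : c * F.card ≤ Γ.degBdry F := Γ.key_count h c hc hc1 F
    have hmes : 0 < Γ.mes F := Finset.sum_pos (fun e _ => Γ.len_pos e) hFne
    have hmesle : Γ.mes F ≤ L * F.card := by
      have := Finset.sum_le_card_nsmul F Γ.len L (fun e _ => hLe e)
      rw [nsmul_eq_mul] at this
      unfold MetricGraph.mes
      calc ∑ e ∈ F, Γ.len e ≤ F.card * L := this
        _ = L * F.card := mul_comm _ _
    rw [div_le_div_iff₀ hLpos hmes]
    nlinarith [hkey, hmes, hmesle, hc0, hLpos]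

/-- **Lemma 6.4 (combinatorial curvature bound).** If `ℓ*(G) < ∞` and `K_comb(v) > 0`
for every vertex `v` (in particular `E_v⁺ ≠ ∅`), then
`α(G) ≥ (inf_v K_comb(v)) / ℓ*(G)`. -/
theorem alpha_ge_inf_comb_curvature (Γ : MetricGraph)
    (hlen : BddAbove (Set.range Γ.len))
    (h : ∀ v : Γ.V, (Γ.plusE v).Nonempty ∧ 0 < Γ.Kcomb v) :
    sInf (Set.range Γ.Kcomb) / Γ.ellSup ≤ Γ.alpha := by
  exact alpha_ge_inf_comb_curvature' Γ hlen h
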